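/- Let G be a group, K a subgroup with |x^G| ≤ n for each x ∈ K, H = ⟨K^G⟩, X = ⋃_{g∈G} K^g, m the maximum of [H : C_H(x)] over x ∈ K, and a ∈ K attaining this maximum, with b_1, …, b_m ∈ H satisfying a^H = {a^{b_i}}. Set U = C_G(⟨b_1, …, b_m⟩). If u ∈ U and ua ∈ X, then [H, u] ≤ [H, a]. -/

import Mathlib

open scoped commutatorElement

lemma conjClass_card {G : Type*} [Group G] (H : Subgroup G) (c : G) :
    Nat.card {x : G | ∃ h ∈ H, x = h⁻¹ * c * h} = (Subgroup.centralizer {c}).relIndex H := by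
  symm
  rw [Subgroup.relIndex, Subgroup.index]
  apply Nat.card_congr
  set N := (Subgroup.centralizer {c}).subgroupOf H with hN
  have wd : ∀ h₁ h₂ : H, (QuotientGroup.leftRel N) h₁ h₂ →
      ((h₁ : G) * c * (h₁ : G)⁻¹ : G) = (h₂ : G) * c * (h₂ : G)⁻¹ := by
    intro h₁ h₂ hr
    rw [QuotientGroup.leftRel_apply] at hr
    rw [hN, Subgroup.mem_subgroupOf] at hr
    have hr' := Subgroup.mem_centralizer_singleton_iff.mp hr
    push_cast at hr'
    calc (h₁ : G) * c * (h₁ : G)⁻¹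
        = (h₁ : G) * (c * ((h₁:G)⁻¹ * (h₂:G))) * (h₂:G)⁻¹ := by group
      _ = (h₁ : G) * ((h₁:G)⁻¹ * (h₂:G) * c) * (h₂:G)⁻¹ := by rw [← hr']
      _ = (h₂ : G) * c * (h₂ : G)⁻¹ := by group
  refine Equiv.ofBijective (Quotient.lift (fun (h : H) =>
      (⟨(h : G) * c * (h : G)⁻¹, ⟨(h : G)⁻¹, H.inv_mem h.2, by group⟩⟩ :
        {x : G | ∃ h ∈ H, x = h⁻¹ * c * h})) (fun h₁ h₂ hr => Subtype.ext (wd h₁ h₂ hr)))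
    ⟨?_, ?_⟩
  · intro q₁ q₂
    induction q₁ using Quotient.ind
    induction q₂ using Quotient.ind
    rename_i h₁ h₂
    intro heq
    have heq' : ((h₁ : G) * c * (h₁ : G)⁻¹ : G) = (h₂ : G) * c * (h₂ : G)⁻¹ :=
      congrArg Subtype.val heq
    apply Quotient.sound
    apply QuotientGroup.leftRel_apply.mpr
    rw [hN, Subgroup.mem_subgroupOf]
    rw [Subgroup.mem_centralizer_singleton_iff]
    push_cast
    calc (h₁:G)⁻¹ * h₂ * c
        = (h₁:G)⁻¹ * ((h₂:G) * c * (h₂:G)⁻¹) * h₂ := by group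
      _ = (h₁:G)⁻¹ * ((h₁:G) * c * (h₁:G)⁻¹) * h₂ := by rw [heq']
      _ = c * ((h₁:G)⁻¹ * h₂) := by group
  · rintro ⟨x, h, hh, rfl⟩
    refine ⟨Quotient.mk _ ⟨h⁻¹, H.inv_mem hh⟩, ?_⟩
    apply Subtype.ext
    show (h⁻¹ : G) * c * (h⁻¹ : G)⁻¹ = h⁻¹ * c * h
    group

theorem stmt_17 (n : ℕ) (G : Type*) [Group G] (K : Subgroup G)
    (hclass : ∀ x ∈ K, (conjugatesOf x).Finite ∧ Nat.card (conjugatesOf x) ≤ n)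
    (H : Subgroup G) (hH : H = Subgroup.normalClosure (K : Set G))
    (X : Set G) (hX : X = {x | ∃ g : G, ∃ k ∈ K, x = g⁻¹ * k * g})
    (m : ℕ)
    (hm : ∀ x ∈ K, 0 < (Subgroup.centralizer {x}).relIndex H ∧
      (Subgroup.centralizer {x}).relIndex H ≤ m)
    (a : G) (ha : a ∈ K) (hamax : (Subgroup.centralizer {a}).relIndex H = m)
    (b : Fin m → G) (hb : ∀ i, b i ∈ H)
    (hbconj : {x | ∃ h ∈ H, x = h⁻¹ * a * h} =
      Set.range (fun i => (b i)⁻¹ * a * (b i)))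
    (U : Subgroup G) (hU : U = Subgroup.centralizer (Set.range b))
    (u : G) (hu : u ∈ U) (hua : u * a ∈ X) :
    Subgroup.closure {z | ∃ h ∈ H, z = ⁅h, u⁆} ≤
      Subgroup.closure {z | ∃ h ∈ H, z = ⁅h, a⁆} := by
  have hnorm : H.Normal := hH ▸ Subgroup.normalClosure_normal
  -- u commutes with each b i
  have hub : ∀ i, u * b i = b i * u := by
    intro i
    rw [hU] at hu
    exact (Subgroup.mem_centralizer_iff.mp hu (b i) ⟨i, rfl⟩).symm
  set W := Subgroup.closure {z | ∃ h ∈ H, z = ⁅h, a⁆} with hW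
  set A : Set G := {x | ∃ h ∈ H, x = h⁻¹ * a * h} with hA
  set S : Set G := {x | ∃ h ∈ H, x = h⁻¹ * (u * a) * h} with hS
  -- card of A
  have hAcard : A.ncard = m := by
    rw [← Nat.card_coe_set_eq, conjClass_card, hamax]
  -- ua = g⁻¹ k g
  rw [hX] at hua
  obtain ⟨g, k, hk, hgk⟩ := hua
  set T : Set G := {x | ∃ h ∈ H, x = h⁻¹ * k * h} with hT
  have hTcard : Nat.card T = (Subgroup.centralizer {k}).relIndex H := conjClass_card H k
  have hTfin : T.Finite := by
    rw [← Set.finite_coe_iff]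
    have : 0 < Nat.card T := by rw [hTcard]; exact (hm k hk).1
    exact (Nat.card_pos_iff.mp this).2
  have hTle : Nat.card T ≤ m := hTcard ▸ (hm k hk).2
  -- S is a conjugate of T
  have hST : S = (fun x => g⁻¹ * x * g) '' T := by
    ext x
    constructor
    · rintro ⟨h, hh, rfl⟩
      refine ⟨(g * h * g⁻¹)⁻¹ * k * (g * h * g⁻¹), ⟨g * h * g⁻¹, hnorm.conj_mem h hh g, rfl⟩, ?_⟩
      rw [hgk]; group
    · rintro ⟨_, ⟨h, hh, rfl⟩, rfl⟩
      refine ⟨g⁻¹ * h * g, ?_, ?_⟩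
      · have := hnorm.conj_mem h hh g⁻¹
        simpa using this
      · rw [hgk]; group
  have hSfin : S.Finite := hST ▸ (hTfin.image _)
  have hScard : S.ncard ≤ m := by
    rw [hST, Set.ncard_image_of_injective _ (fun x y hxy => by
      have : g * (g⁻¹ * x * g) * g⁻¹ = g * (g⁻¹ * y * g) * g⁻¹ := by rw [hxy]
      simpa [mul_assoc] using this)]
    rw [← Nat.card_coe_set_eq]
    exact hTle
  -- u • A ⊆ S
  have hsub : (fun x => u * x) '' A ⊆ S := by
    rintro _ ⟨x, hxA, rfl⟩
    have hx : x ∈ Set.range (fun i => (b i)⁻¹ * a * (b i)) := hbconj ▸ hxA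
    obtain ⟨i, rfl⟩ := hx
    refine ⟨b i, hb i, ?_⟩
    show u * ((b i)⁻¹ * a * b i) = (b i)⁻¹ * (u * a) * b i
    have := hub i
    symm
    calc (b i)⁻¹ * (u * a) * b i = (b i)⁻¹ * (u * b i) * ((b i)⁻¹ * a * b i) := by group
      _ = (b i)⁻¹ * (b i * u) * ((b i)⁻¹ * a * b i) := by rw [this]
      _ = u * ((b i)⁻¹ * a * b i) := by group
  -- equality by counting
  have hSA : (fun x => u * x) '' A = S := by
    apply Set.eq_of_subset_of_ncard_le hsub ?_ hSfin
    rw [Set.ncard_image_of_injective _ (mul_right_injective u), hAcard]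
    exact hScard
  -- key: commutators of u⁻¹ with H lie in W
  have key : ∀ h ∈ H, ⁅u⁻¹, h⁆ ∈ W := by
    intro h hh
    -- h (ua) h⁻¹ ∈ S
    have h1 : h * (u * a) * h⁻¹ ∈ S := ⟨h⁻¹, H.inv_mem hh, by group⟩
    rw [← hSA] at h1
    obtain ⟨x, hxA, hx⟩ := h1
    obtain ⟨i, rfl⟩ := (hbconj ▸ hxA : x ∈ Set.range (fun i => (b i)⁻¹ * a * (b i)))
    have h2 : h * a * h⁻¹ ∈ A := ⟨h⁻¹, H.inv_mem hh, by group⟩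
    obtain ⟨j, hj⟩ := (hbconj ▸ h2 : _ ∈ Set.range (fun i => (b i)⁻¹ * a * (b i)))
    -- hx : u * ((b i)⁻¹ * a * b i) = h * (u*a) * h⁻¹
    -- hj : h * a * h⁻¹ = (b j)⁻¹ * a * b j  (direction?)
    have hgen₁ : ⁅(b i)⁻¹, a⁆ ∈ W := Subgroup.subset_closure ⟨(b i)⁻¹, H.inv_mem (hb i), rfl⟩
    have hgen₂ : ⁅(b j)⁻¹, a⁆ ∈ W := Subgroup.subset_closure ⟨(b j)⁻¹, H.inv_mem (hb j), rfl⟩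
    have heq : ⁅u⁻¹, h⁆ = ⁅(b i)⁻¹, a⁆ * ⁅(b j)⁻¹, a⁆⁻¹ := by
      have e1 : h * (u * a) * h⁻¹ = u * ((b i)⁻¹ * a * b i) := hx.symm
      have e2 : h * a * h⁻¹ = (b j)⁻¹ * a * (b j) := hj.symm
      have e3 : h * u * h⁻¹ = u * ((b i)⁻¹ * a * b i) * ((b j)⁻¹ * a * (b j))⁻¹ := by
        rw [← e1, ← e2]; group
      rw [commutatorElement_def, commutatorElement_def, commutatorElement_def]
      calc u⁻¹ * h * u⁻¹⁻¹ * h⁻¹ = u⁻¹ * (h * u * h⁻¹) := by group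
        _ = u⁻¹ * (u * ((b i)⁻¹ * a * b i) * ((b j)⁻¹ * a * (b j))⁻¹) := by rw [e3]
        _ = _ := by group
    rw [heq]
    exact mul_mem hgen₁ (inv_mem hgen₂)
  -- conclude
  rw [Subgroup.closure_le]
  rintro z ⟨h, hh, rfl⟩
  have hh' : u * h * u⁻¹ ∈ H := hnorm.conj_mem h hh u
  have := key _ hh'
  have heq : ⁅h, u⁆ = ⁅u⁻¹, u * h * u⁻¹⁆ := by
    simp only [commutatorElement_def]; group
  rw [heq]
  exact this
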